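/- Let k ≥ 1, let X be the set of all surjections u : {1,…,k+1} → {1,…,k}, and let ℂX be the permutation representation of G = S_k × S_{k+1} on the free ℂ-vector space with basis X, where (h,g)·u = h ∘ u ∘ g⁻¹. For any irreducible complex representation U of S_k with character χ_U and any irreducible complex representation V of S_{k+1} with character χ_V, the multiplicity of the irreducible G-representation U ⊠ V* (the external tensor product of U with the dual of V) as a constituent of ℂX equals (1/(2·(k−1)!)) · ∑_{σ} ∑_{τ} χ_U(σ̄)·χ_V(σ∘τ), where σ ranges over the permutations of {1,…,k+1} fixing both k and k+1, σ̄ denotes the permutation of {1,…,k} agreeing with σ on {1,…,k−1} and fixing k, and τ ranges over {identity, transposition (k, k+1)}. -/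

import Mathlib

/-- Extend a permutation of `Fin a` to a permutation of `Fin b` (`a ≤ b`) fixing the rest. -/
def extPerm {a b : ℕ} (hab : a ≤ b) (σ : Equiv.Perm (Fin a)) : Equiv.Perm (Fin b) where
  toFun i := if h : (i : ℕ) < a then Fin.castLE hab (σ ⟨i, h⟩) else i
  invFun i := if h : (i : ℕ) < a then Fin.castLE hab (σ⁻¹ ⟨i, h⟩) else i
  left_inv i := by
    dsimp only
    by_cases h : (i : ℕ) < a
    · rw [dif_pos h]
      have h2 : ((Fin.castLE hab (σ ⟨i, h⟩)) : ℕ) < a := (σ ⟨i, h⟩).isLt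
      rw [dif_pos h2]
      apply Fin.ext
      simp [Fin.eta]
    · rw [dif_neg h, dif_neg h]
  right_inv i := by
    dsimp only
    by_cases h : (i : ℕ) < a
    · rw [dif_pos h]
      have h2 : ((Fin.castLE hab (σ⁻¹ ⟨i, h⟩)) : ℕ) < a := (σ⁻¹ ⟨i, h⟩).isLt
      rw [dif_pos h2]
      apply Fin.ext
      simp [Fin.eta]
    · rw [dif_neg h, dif_neg h]

open Equiv in
/-- The action of `S_k × S_{k+1}` on the set `X` of surjections `u : Fin (k+1) → Fin k` by
`(h, g) · u = h ∘ u ∘ g⁻¹`. -/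
instance surjAction (m : ℕ) :
    MulAction (Perm (Fin (m + 1)) × Perm (Fin (m + 2)))
      {u : Fin (m + 2) → Fin (m + 1) // Function.Surjective u} where
  smul p u := ⟨⇑p.1 ∘ u.1 ∘ ⇑p.2⁻¹,
    (p.1.surjective).comp (u.2.comp (p.2⁻¹).surjective)⟩
  one_smul u := by
    apply Subtype.ext
    funext x
    show (1 : Perm (Fin (m + 1))) (u.1 ((1 : Perm (Fin (m + 2)))⁻¹ x)) = u.1 x
    simp
  mul_smul p q u := by
    apply Subtype.ext
    funext x
    show (p.1 * q.1) (u.1 ((p.2 * q.2)⁻¹ x)) = p.1 (q.1 (u.1 (q.2⁻¹ (p.2⁻¹ x))))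
    simp [mul_inv_rev, Equiv.Perm.mul_apply]

open Equiv LinearMap

namespace M5
variable (m : ℕ)
abbrev G := Perm (Fin (m+1)) × Perm (Fin (m+2))
abbrev X := {u : Fin (m + 2) → Fin (m + 1) // Function.Surjective u}

def u0 : X m := ⟨fun i => ⟨min i m, by omega⟩, fun j => ⟨⟨j, by omega⟩, by
  apply Fin.ext; simp; omega⟩⟩

lemma smul_apply (p : G m) (u : X m) : (p • u).1 = ⇑p.1 ∘ u.1 ∘ ⇑p.2⁻¹ := rfl

example : True := by
  have : Fintype (X 3) := inferInstance
  have : FiniteDimensional ℂ (X 3 →₀ ℂ) := inferInstance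
  trivial

lemma trace_perm (p : G m) :
    trace ℂ _ (Representation.ofMulAction ℂ (G m) (X m) p)
      = ((Finset.univ.filter fun u : X m => p • u = u).card : ℂ) := by
  classical
  rw [trace_eq_matrix_trace ℂ (MonoidAlgebra.basis (X m) ℂ)]
  rw [Matrix.trace]
  rw [← Finset.sum_boole]
  congr 1
  ext u
  simp [Matrix.diag_apply, LinearMap.toMatrix_apply, MonoidAlgebra.basis,
    Representation.ofMulAction_single, Finsupp.single_apply]

end M5

namespace M5
variable {m : ℕ}

lemma extPerm_apply {a b : ℕ} (hab : a ≤ b) (σ : Perm (Fin a)) (i : Fin b) :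
    extPerm hab σ i = if h : (i : ℕ) < a then Fin.castLE hab (σ ⟨i, h⟩) else i := rfl

lemma extPerm_injective {a b : ℕ} (hab : a ≤ b) :
    Function.Injective (extPerm hab) := by
  intro σ σ' hs
  ext i
  have := congrFun (congrArg (fun (e : Perm (Fin b)) => (e : Fin b → Fin b)) hs)
    (Fin.castLE hab i)
  simp only [extPerm_apply] at this
  rw [dif_pos (by simpa using i.isLt), dif_pos (by simpa using i.isLt)] at this
  have h2 : (⟨((Fin.castLE hab i) : ℕ), by simpa using i.isLt⟩ : Fin a) = i := by
    apply Fin.ext; rfl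
  rw [h2] at this
  exact congrArg Fin.val (Fin.castLE_injective hab this)

lemma exists_smul_u0 (u : X m) : ∃ p : G m, p • u0 m = u := by
  classical
  obtain ⟨i₁, i₂, hne, hval⟩ := Fintype.exists_ne_map_eq_of_card_lt u.1 (by simp)
  set s : Fin (m+1) → Fin (m+2) :=
    fun j => if Function.surjInv u.2 j = i₂ then i₁ else Function.surjInv u.2 j with hs
  have hus : ∀ j, u.1 (s j) = j := by
    intro j; rw [hs]; dsimp only; split
    · rename_i hsj; rw [hval, ← hsj]; exact Function.surjInv_eq u.2 j
    · exact Function.surjInv_eq u.2 j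
  have hsne : ∀ j, s j ≠ i₂ := by
    intro j; rw [hs]; dsimp only; split
    · exact hne
    · assumption
  have hsinj : Function.Injective s := Function.LeftInverse.injective hus
  set h : Perm (Fin (m+1)) := Equiv.swap (Fin.last m) (u.1 i₂) with hh
  set g0 : Fin (m+2) → Fin (m+2) :=
    fun i => if hi : (i:ℕ) < m+1 then s (h ⟨i, hi⟩) else i₂ with hg0
  have hg0inj : Function.Injective g0 := by
    intro a b hab
    rw [hg0] at hab; dsimp only at hab
    split at hab <;> split at hab
    · have := h.injective (hsinj hab)
      have h2 := congrArg Fin.val this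
      apply Fin.ext; exact h2
    · exact absurd hab (hsne _)
    · exact absurd hab.symm (hsne _)
    · apply Fin.ext; omega
  set g : Perm (Fin (m+2)) := Equiv.ofBijective g0 (Finite.injective_iff_bijective.1 hg0inj)
    with hg
  refine ⟨(h, g), ?_⟩
  have key : ∀ y, h ((u0 m).1 y) = u.1 (g y) := by
    intro y
    show h ((u0 m).1 y) = u.1 (g0 y)
    by_cases hy : (y:ℕ) < m+1
    · rw [hg0]; dsimp only; rw [dif_pos hy, hus]
      congr 1; apply Fin.ext
      show (min (y:ℕ) m) = (y:ℕ)
      omega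
    · rw [hg0]; dsimp only; rw [dif_neg hy]
      have h1 : (u0 m).1 y = Fin.last m := by
        apply Fin.ext
        show (min (y:ℕ) m) = m
        omega
      rw [h1, hh, Equiv.swap_apply_left]
  apply Subtype.ext
  funext x
  show h ((u0 m).1 (g⁻¹ x)) = u.1 x
  rw [key (g⁻¹ x), Equiv.Perm.inv_def, Equiv.apply_symm_apply]

end M5

namespace M5
variable {m : ℕ}

/-- the distinguished transposition -/
def tau0 (m : ℕ) : Perm (Fin (m+2)) :=
  Equiv.swap (⟨m, Nat.lt_succ_of_le (Nat.le_succ m)⟩ : Fin (m + 2)) (Fin.last (m + 1))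

lemma fix_iff (p : G m) :
    p • u0 m = u0 m ↔ ∀ i, p.1 ((u0 m).1 i) = (u0 m).1 (p.2 i) := by
  constructor
  · intro hp i
    have := congrFun (congrArg Subtype.val hp) (p.2 i)
    simpa [smul_apply, Equiv.Perm.inv_def] using this
  · intro hfix
    apply Subtype.ext
    funext x
    show p.1 ((u0 m).1 (p.2⁻¹ x)) = (u0 m).1 x
    have := hfix (p.2⁻¹ x)
    rwa [Equiv.Perm.inv_def, Equiv.apply_symm_apply] at this

lemma u0_val (i : Fin (m+2)) : (((u0 m).1 i : Fin (m+1)) : ℕ) = min (i : ℕ) m := rfl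

lemma stab_iff (p : G m) :
    p • u0 m = u0 m ↔ ∃ σ : Perm (Fin m),
      p.1 = extPerm (Nat.le_succ m) σ ∧
        (p.2 = extPerm (Nat.le_add_right m 2) σ ∨ p.2 = extPerm (Nat.le_add_right m 2) σ * tau0 m) := by
  rw [fix_iff]
  obtain ⟨h, g⟩ := p
  dsimp only
  constructor
  · intro hfix
    set fm : Fin (m+2) := ⟨m, by omega⟩ with hfm
    set fl : Fin (m+2) := Fin.last (m+1) with hfl
    have hufm : (u0 m).1 fm = Fin.last m := by
      apply Fin.ext; show min m m = m; omega
    have hufl : (u0 m).1 fl = Fin.last m := by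
      apply Fin.ext; show min (m+1) m = m; omega
    have A := hfix fm
    have B := hfix fl
    rw [hufm] at A
    rw [hufl] at B
    have hgne : g fm ≠ g fl := fun hc => by
      have h2 : fm = fl := g.injective hc
      have h3 : m = m + 1 := congrArg Fin.val h2
      omega
    have hcases : ((g fm : ℕ) = m ∧ (g fl : ℕ) = m + 1) ∨
        ((g fm : ℕ) = m + 1 ∧ (g fl : ℕ) = m) := by
      have hAB : (u0 m).1 (g fm) = (u0 m).1 (g fl) := by rw [← A, ← B]
      have h4 : min ((g fm : Fin (m+2)) : ℕ) m = min ((g fl : Fin (m+2)) : ℕ) m :=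
        congrArg Fin.val hAB
      have h1 : (g fm : ℕ) < m + 2 := (g fm).isLt
      have h2 : (g fl : ℕ) < m + 2 := (g fl).isLt
      have h3 : (g fm : ℕ) ≠ (g fl : ℕ) := fun hc => hgne (Fin.ext hc)
      omega
    have hm : (h (Fin.last m) : ℕ) = m := by
      have h4 : (h (Fin.last m) : ℕ) = min ((g fm : Fin (m+2)) : ℕ) m := congrArg Fin.val A
      rcases hcases with ⟨h1, _⟩ | ⟨h1, _⟩ <;> omega
    have hsmall : ∀ i : Fin m, (h ⟨(i:ℕ), by omega⟩ : ℕ) = (g ⟨(i:ℕ), by omega⟩ : ℕ) ∧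
        (g ⟨(i:ℕ), by omega⟩ : ℕ) < m := by
      intro i
      have hilt : (i : ℕ) < m := i.isLt
      have hC := hfix ⟨(i:ℕ), by omega⟩
      have hu : (u0 m).1 ⟨(i:ℕ), by omega⟩ = ⟨(i:ℕ), by omega⟩ := by
        apply Fin.ext; show min (i:ℕ) m = (i:ℕ); omega
      rw [hu] at hC
      have hne1 : g ⟨(i:ℕ), by omega⟩ ≠ g fm := fun hc => by
        have h2 : (⟨(i:ℕ), by omega⟩ : Fin (m+2)) = fm := g.injective hc
        have h3 : (i : ℕ) = m := congrArg Fin.val h2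
        omega
      have hne2 : g ⟨(i:ℕ), by omega⟩ ≠ g fl := fun hc => by
        have h2 : (⟨(i:ℕ), by omega⟩ : Fin (m+2)) = fl := g.injective hc
        have h3 : (i : ℕ) = m + 1 := congrArg Fin.val h2
        omega
      have hlt : (g ⟨(i:ℕ), by omega⟩ : ℕ) < m := by
        have e1 : (g ⟨(i:ℕ), by omega⟩ : ℕ) ≠ (g fm : ℕ) := fun hc => hne1 (Fin.ext hc)
        have e2 : (g ⟨(i:ℕ), by omega⟩ : ℕ) ≠ (g fl : ℕ) := fun hc => hne2 (Fin.ext hc)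
        have e3 := (g ⟨(i:ℕ), by omega⟩).isLt
        rcases hcases with ⟨h1, h2⟩ | ⟨h1, h2⟩ <;> omega
      refine ⟨?_, hlt⟩
      have h4 : (h ⟨(i:ℕ), by omega⟩ : ℕ) = min ((g ⟨(i:ℕ), by omega⟩ : Fin (m+2)) : ℕ) m :=
        congrArg Fin.val hC
      omega
    set σ0 : Fin m → Fin m := fun i => ⟨(h ⟨(i:ℕ), by omega⟩ : ℕ), (hsmall i).1 ▸ (hsmall i).2⟩
      with hσ0
    have hσ0inj : Function.Injective σ0 := by
      intro i j hij
      have h2 : ((σ0 i : Fin m) : ℕ) = ((σ0 j : Fin m) : ℕ) := congrArg Fin.val hij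
      have h2' : (h ⟨(i:ℕ), by omega⟩ : ℕ) = (h ⟨(j:ℕ), by omega⟩ : ℕ) := h2
      have h3 := h.injective (Fin.ext h2')
      have h4 : ((⟨(i:ℕ), by omega⟩ : Fin (m+1)) : ℕ) = ((⟨(j:ℕ), by omega⟩ : Fin (m+1)) : ℕ) :=
        congrArg Fin.val h3
      exact Fin.ext h4
    set σ : Perm (Fin m) := Equiv.ofBijective σ0 (Finite.injective_iff_bijective.1 hσ0inj)
      with hσ
    have hσap : ∀ i : Fin m, (σ i : ℕ) = (h ⟨(i:ℕ), by omega⟩ : ℕ) := fun i => rfl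
    refine ⟨σ, ?_, ?_⟩
    · ext x
      rw [extPerm_apply]
      by_cases hx : (x:ℕ) < m
      · rw [dif_pos hx]
        show (h x : ℕ) = ((σ ⟨(x:ℕ), hx⟩ : Fin m) : ℕ)
        rw [hσap]
      · rw [dif_neg hx]
        have hx2 : (x : ℕ) = m := by have := x.isLt; omega
        have hxl : x = Fin.last m := Fin.ext hx2
        rw [hxl]
        show (h (Fin.last m) : ℕ) = m
        exact hm
    · rcases hcases with ⟨h1, h2⟩ | ⟨h1, h2⟩
      · left
        ext x
        rw [extPerm_apply]
        by_cases hx : (x:ℕ) < m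
        · rw [dif_pos hx]
          show (g x : ℕ) = ((σ ⟨(x:ℕ), hx⟩ : Fin m) : ℕ)
          rw [hσap]
          have h5 := (hsmall ⟨(x:ℕ), hx⟩).1
          have h6 : (⟨((⟨(x:ℕ), hx⟩ : Fin m) : ℕ), by omega⟩ : Fin (m+2)) = x := Fin.ext rfl
          rw [h6] at h5
          rw [← h5]
        · rw [dif_neg hx]
          have := x.isLt
          rcases (by omega : (x:ℕ) = m ∨ (x:ℕ) = m+1) with hx2 | hx2
          · have hxx : x = fm := Fin.ext hx2
            rw [hxx]; show (g fm : ℕ) = m; exact h1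
          · have hxx : x = fl := Fin.ext hx2
            rw [hxx]; show (g fl : ℕ) = m + 1; exact h2
      · right
        ext x
        rw [Equiv.Perm.mul_apply]
        by_cases hx : (x:ℕ) < m
        · have htx : tau0 m x = x := by
            apply Equiv.swap_apply_of_ne_of_ne
            · intro hc; have h3 : (x : ℕ) = m := congrArg Fin.val hc; omega
            · intro hc; have h3 : (x : ℕ) = m + 1 := congrArg Fin.val hc; omega
          rw [htx, extPerm_apply, dif_pos hx]
          show (g x : ℕ) = ((σ ⟨(x:ℕ), hx⟩ : Fin m) : ℕ)
          rw [hσap]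
          have h5 := (hsmall ⟨(x:ℕ), hx⟩).1
          have h6 : (⟨((⟨(x:ℕ), hx⟩ : Fin m) : ℕ), by omega⟩ : Fin (m+2)) = x := Fin.ext rfl
          rw [h6] at h5
          rw [← h5]
        · have := x.isLt
          rcases (by omega : (x:ℕ) = m ∨ (x:ℕ) = m+1) with hx2 | hx2
          · have hxx : x = fm := Fin.ext hx2
            rw [hxx]
            have ht : tau0 m fm = fl := Equiv.swap_apply_left _ _
            rw [ht, extPerm_apply, dif_neg (by show ¬ (m+1 < m); omega)]
            show (g fm : ℕ) = m + 1
            exact h1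
          · have hxx : x = fl := Fin.ext hx2
            rw [hxx]
            have ht : tau0 m fl = fm := Equiv.swap_apply_right _ _
            rw [ht, extPerm_apply, dif_neg (by show ¬ (m < m); omega)]
            show (g fl : ℕ) = m
            exact h2
  · rintro ⟨σ, h1, h2⟩
    have main : ∀ i : Fin (m+2),
        extPerm (by omega : m ≤ m+1) σ ((u0 m).1 i)
          = (u0 m).1 (extPerm (by omega : m ≤ m+2) σ i) := by
      intro i
      by_cases hi : (i:ℕ) < m
      · have hu : (u0 m).1 i = ⟨(i:ℕ), by omega⟩ := by
          apply Fin.ext; show min (i:ℕ) m = (i:ℕ); omega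
        rw [hu, extPerm_apply, extPerm_apply,
          dif_pos (show ((⟨(i:ℕ), by omega⟩ : Fin (m+1)):ℕ) < m from hi), dif_pos hi]
        apply Fin.ext
        show ((σ ⟨(i:ℕ), hi⟩ : Fin m) : ℕ) = min ((σ ⟨(i:ℕ), hi⟩ : Fin m) : ℕ) m
        have := (σ ⟨(i:ℕ), hi⟩).isLt
        omega
      · have hu : (u0 m).1 i = Fin.last m := by
          apply Fin.ext; show min (i:ℕ) m = m; have := i.isLt; omega
        rw [hu, extPerm_apply, extPerm_apply,
          dif_neg (show ¬ ((Fin.last m : ℕ) < m) by show ¬ (m < m); omega), dif_neg hi]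
        apply Fin.ext
        show m = min (i : ℕ) m
        have := i.isLt
        omega
    have hu0tau : ∀ i, (u0 m).1 (tau0 m i) = (u0 m).1 i := by
      intro i
      by_cases h1' : i = (⟨m, by omega⟩ : Fin (m+2))
      · rw [h1', tau0, Equiv.swap_apply_left]
        apply Fin.ext; show min (m+1) m = min m m; omega
      · by_cases h2' : i = Fin.last (m+1)
        · rw [h2', tau0, Equiv.swap_apply_right]
          apply Fin.ext; show min m m = min (m+1) m; omega
        · rw [tau0, Equiv.swap_apply_of_ne_of_ne h1' h2']
    intro i
    rw [h1]
    rcases h2 with h2 | h2 <;> rw [h2]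
    · exact main i
    · rw [Equiv.Perm.mul_apply, ← hu0tau i]
      exact main (tau0 m i)

end M5

namespace M5

lemma trace_rep_conj {G' : Type} [Group G'] {Vv : Type} [AddCommGroup Vv] [Module ℂ Vv]
    (ρ : Representation ℂ G' Vv) (a q : G') :
    trace ℂ Vv (ρ (a * q * a⁻¹)) = trace ℂ Vv (ρ q) := by
  have h1 : ρ (a * q * a⁻¹) = (ρ a * ρ q) * ρ a⁻¹ := by rw [← map_mul, ← map_mul]
  rw [h1, trace_mul_comm, ← map_mul, ← map_mul]
  congr 1
  group

lemma trace_perm_inv {n : ℕ} {Vv : Type} [AddCommGroup Vv] [Module ℂ Vv]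
    (ρ : Representation ℂ (Perm (Fin n)) Vv) (g : Perm (Fin n)) :
    trace ℂ Vv (ρ g⁻¹) = trace ℂ Vv (ρ g) := by
  have h1 : IsConj g g⁻¹ :=
    Equiv.Perm.isConj_iff_cycleType_eq.2 (Equiv.Perm.cycleType_inv g).symm
  obtain ⟨c, hc⟩ := isConj_iff.1 h1
  rw [← hc, trace_rep_conj]

lemma sum_trace_nat {G' : Type} [Group G'] [DecidableEq G'] {Vv : Type} [AddCommGroup Vv]
    [Module ℂ Vv] [FiniteDimensional ℂ Vv]
    (ρ : Representation ℂ G' Vv) (s : Finset G') (h1 : (1:G') ∈ s)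
    (hmul : ∀ a ∈ s, ∀ b ∈ s, a * b ∈ s) (hinv : ∀ a ∈ s, a⁻¹ ∈ s) :
    ∃ n : ℕ, ∑ q ∈ s, trace ℂ Vv (ρ q) = (n : ℂ) := by
  classical
  set P : Vv →ₗ[ℂ] Vv := ∑ q ∈ s, ρ q with hP
  have hcard : (s.card : ℂ) ≠ 0 := by
    have h0 : s.card ≠ 0 := Finset.card_ne_zero.2 ⟨1, h1⟩
    exact_mod_cast h0
  have hPP : P * P = (s.card : ℕ) • P := by
    rw [hP, Finset.sum_mul_sum]
    have : ∀ a ∈ s, ∑ b ∈ s, ρ a * ρ b = P := by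
      intro a ha
      have : ∑ b ∈ s, ρ a * ρ b = ∑ b ∈ s, ρ (a * b) := by
        apply Finset.sum_congr rfl
        intro b _; rw [map_mul]
      rw [this]
      apply Finset.sum_nbij' (fun b => a * b) (fun c => a⁻¹ * c)
      · intro b hb; exact hmul a ha b hb
      · intro c hc; exact hmul a⁻¹ (hinv a ha) c hc
      · intro b _; group
      · intro c _; group
      · intro b _; rfl
    rw [Finset.sum_congr rfl this, Finset.sum_const]
  set e : Vv →ₗ[ℂ] Vv := (s.card : ℂ)⁻¹ • P with he
  have hee : e ∘ₗ e = e := by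
    have h2 : e ∘ₗ e = e * e := rfl
    rw [h2, he, smul_mul_smul_comm, hPP, ← Nat.cast_smul_eq_nsmul ℂ, smul_smul]
    congr 1
    field_simp
  have hproj : IsProj (range e) e := by
    refine ⟨fun x => mem_range_self e x, fun x hx => ?_⟩
    obtain ⟨y, hy⟩ := hx
    calc e x = e (e y) := by rw [hy]
    _ = (e ∘ₗ e) y := rfl
    _ = e y := by rw [hee]
    _ = x := hy
  refine ⟨s.card * Module.finrank ℂ (range e), ?_⟩
  have h3 : trace ℂ Vv e = (Module.finrank ℂ (range e) : ℂ) := hproj.trace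
  have hPe : P = (s.card : ℂ) • e := by
    rw [he, smul_smul, mul_inv_cancel₀ hcard, one_smul]
  have h4 : ∑ q ∈ s, trace ℂ Vv (ρ q) = trace ℂ Vv P := by rw [hP, map_sum]
  rw [h4, hPe, map_smul, h3, smul_eq_mul]
  push_cast
  ring

variable {m : ℕ}

lemma tau0_ne_one : tau0 m ≠ 1 := by
  rw [tau0, Ne, Equiv.swap_eq_one_iff]
  intro hc
  have h2 : m = m + 1 := congrArg Fin.val hc
  omega

lemma stab_sum (F : G m → ℂ) :
    ∑ p ∈ Finset.univ.filter (fun p : G m => p • u0 m = u0 m), F p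
      = ∑ σ : Perm (Fin m), ∑ τ ∈ ({1, tau0 m} : Finset (Perm (Fin (m+2)))),
          F (extPerm (Nat.le_succ m) σ, extPerm (Nat.le_add_right m 2) σ * τ) := by
  classical
  rw [← Finset.sum_product']
  symm
  apply Finset.sum_bij
    (i := fun (a : Perm (Fin m) × Perm (Fin (m+2))) _ =>
      ((extPerm (by omega) a.1, extPerm (by omega) a.1 * a.2) : G m))
  · rintro ⟨σ, τ⟩ ha
    simp only [Finset.mem_product, Finset.mem_univ, true_and, Finset.mem_insert,
      Finset.mem_singleton] at ha
    rw [Finset.mem_filter]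
    refine ⟨Finset.mem_univ _, ?_⟩
    rw [stab_iff]
    exact ⟨σ, rfl, by
      rcases ha with h | h
      · left; rw [h, mul_one]
      · right; rw [h]⟩
  · rintro ⟨σ, τ⟩ _ ⟨σ', τ'⟩ _ hij
    have h1 := congrArg Prod.fst hij
    have h2 := congrArg Prod.snd hij
    simp only at h1 h2
    have hσ : σ = σ' := extPerm_injective (by omega : m ≤ m + 1) h1
    subst hσ
    have h3 : extPerm (by omega : m ≤ m + 2) σ = extPerm (by omega) σ := rfl
    have hτ : τ = τ' := by
      have := mul_left_cancel (a := extPerm (by omega : m ≤ m + 2) σ) h2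
      exact this
    rw [hτ]
  · intro p hp
    rw [Finset.mem_filter] at hp
    obtain ⟨σ, h1, h2⟩ := (stab_iff p).1 hp.2
    rcases h2 with h2 | h2
    · refine ⟨(σ, 1), ?_, ?_⟩
      · simp
      · simp only [mul_one]
        ext <;> simp [← h1, ← h2]
    · refine ⟨(σ, tau0 m), ?_, ?_⟩
      · simp
      · ext <;> simp [← h1, ← h2]
  · intros; rfl

lemma card_stab : (Finset.univ.filter (fun p : G m => p • u0 m = u0 m)).card
    = 2 * Nat.factorial m := by
  classical
  have h1 : ((Finset.univ.filter (fun p : G m => p • u0 m = u0 m)).card : ℂ)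
      = ∑ p ∈ Finset.univ.filter (fun p : G m => p • u0 m = u0 m), (1 : ℂ) := by
    rw [Finset.sum_const, nsmul_eq_mul, mul_one]
  rw [stab_sum (fun _ => (1:ℂ))] at h1
  have h2 : ({1, tau0 m} : Finset (Perm (Fin (m+2)))).card = 2 := by
    rw [Finset.card_insert_of_notMem (by
        simp only [Finset.mem_singleton]
        exact fun h => tau0_ne_one (m := m) h.symm),
      Finset.card_singleton]
  rw [Finset.sum_const, Finset.sum_const, h2] at h1
  have h3 : (Finset.univ : Finset (Perm (Fin m))).card = Nat.factorial m := by
    rw [Finset.card_univ, Fintype.card_perm, Fintype.card_fin]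
  rw [h3] at h1
  have : ((Finset.univ.filter (fun p : G m => p • u0 m = u0 m)).card : ℂ)
      = ((2 * Nat.factorial m : ℕ) : ℂ) := by
    rw [h1]; push_cast; ring
  exact_mod_cast this

lemma card_eq : Fintype.card (G m) = Fintype.card (X m) * (2 * Nat.factorial m) := by
  classical
  have horb : (MulAction.orbit (G m) (u0 m)) = Set.univ :=
    Set.eq_univ_of_forall fun u => MulAction.mem_orbit_iff.2 (exists_smul_u0 u)
  letI : Fintype (MulAction.orbit (G m) (u0 m)) := (Set.toFinite _).fintype
  have h1 := MulAction.card_orbit_mul_card_stabilizer_eq_card_group (G m) (u0 m)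
  have h2 : Fintype.card (MulAction.orbit (G m) (u0 m)) = Fintype.card (X m) :=
    Fintype.card_congr ((Equiv.setCongr horb).trans (Equiv.Set.univ _))
  have h3 : Fintype.card (MulAction.stabilizer (G m) (u0 m)) = 2 * Nat.factorial m := by
    rw [← card_stab (m := m)]
    rw [Fintype.card_congr (Equiv.subtypeEquivRight
      (fun p : G m => (MulAction.mem_stabilizer_iff (g := p) (a := u0 m))))]
    exact Fintype.card_subtype _
  rw [h2, h3] at h1
  exact h1.symm

end M5


set_option maxHeartbeats 2000000 in
open Equiv LinearMap in
/-- Let `k = m + 1 ≥ 1`, let `X` be the set of surjections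
`u : {1,…,k+1} → {1,…,k}` and let `ℂX` be the permutation representation of
`G = S_k × S_{k+1}` on it, `(h,g) · u = h ∘ u ∘ g⁻¹`.  For irreducible complex
representations `U` of `S_k` and `V` of `S_{k+1}`, the multiplicity of `U ⊠ V*` in `ℂX`
(i.e. the character inner product `(1/|G|) ∑_{g ∈ G} χ_{ℂX}(g) conj(χ_{U ⊠ V*}(g))`)
equals `(1/(2 (k−1)!)) ∑_σ ∑_τ χ_U(σ̄) χ_V(σ τ)`, where `σ` ranges over the permutations
of `{1,…,k+1}` fixing `k` and `k+1` (i.e. extensions of permutations of `{1,…,k−1}`),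
`σ̄` is the corresponding permutation of `{1,…,k}`, and `τ ∈ {1, (k, k+1)}`. -/
theorem multiplicity_in_permutation_module (m : ℕ)
    (VU : Type) [AddCommGroup VU] [Module ℂ VU] [FiniteDimensional ℂ VU] [Nontrivial VU]
    (VV : Type) [AddCommGroup VV] [Module ℂ VV] [FiniteDimensional ℂ VV] [Nontrivial VV]
    (U : Representation ℂ (Perm (Fin (m + 1))) VU)
    (V : Representation ℂ (Perm (Fin (m + 2))) VV)
    (hU : ∀ p : Submodule ℂ VU, (∀ g v, v ∈ p → U g v ∈ p) → p = ⊥ ∨ p = ⊤)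
    (hV : ∀ p : Submodule ℂ VV, (∀ g v, v ∈ p → V g v ∈ p) → p = ⊥ ∨ p = ⊤) :
    (1 / (Fintype.card (Perm (Fin (m + 1)) × Perm (Fin (m + 2))) : ℂ)) *
      ∑ p : Perm (Fin (m + 1)) × Perm (Fin (m + 2)),
        trace ℂ _ ((Representation.ofMulAction ℂ (Perm (Fin (m + 1)) × Perm (Fin (m + 2)))
            {u : Fin (m + 2) → Fin (m + 1) // Function.Surjective u}) p) *
          (starRingEnd ℂ)
            (trace ℂ _ ((Representation.tprod
              (U.comp (MonoidHom.fst (Perm (Fin (m + 1))) (Perm (Fin (m + 2)))) :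
                Representation ℂ (Perm (Fin (m + 1)) × Perm (Fin (m + 2))) VU)
              (V.dual.comp (MonoidHom.snd (Perm (Fin (m + 1))) (Perm (Fin (m + 2)))) :
                Representation ℂ (Perm (Fin (m + 1)) × Perm (Fin (m + 2)))
                  (Module.Dual ℂ VV))) p)) =
    (1 / (2 * Nat.factorial m : ℂ)) *
      ∑ σ : Perm (Fin m),
        ∑ τ ∈ ({1, Equiv.swap (⟨m, by omega⟩ : Fin (m + 2)) (Fin.last (m + 1))} :
            Finset (Perm (Fin (m + 2)))),
          trace ℂ VU (U (extPerm (by omega) σ)) *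
            trace ℂ VV (V (extPerm (by omega) σ * τ)) := by
  classical
  set ρW : Representation ℂ (M5.G m) (TensorProduct ℂ VU (Module.Dual ℂ VV)) :=
    Representation.tprod
      (U.comp (MonoidHom.fst (Perm (Fin (m + 1))) (Perm (Fin (m + 2)))))
      (V.dual.comp (MonoidHom.snd (Perm (Fin (m + 1))) (Perm (Fin (m + 2))))) with hρW
  set χ : M5.G m → ℂ := fun p => trace ℂ _ (ρW p) with hχ
  have key : ∀ p : M5.G m, χ p = trace ℂ VU (U p.1) * trace ℂ VV (V p.2⁻¹) := by
    intro p
    rw [hχ]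
    dsimp only
    rw [hρW, Representation.tprod_apply, trace_tensorProduct']
    congr 1
    show trace ℂ _ (V.dual p.2) = _
    rw [Representation.dual_apply, trace_transpose']
  set Hs : Finset (M5.G m) :=
    Finset.univ.filter (fun p : M5.G m => p • M5.u0 m = M5.u0 m) with hHs
  -- Step: the big sum equals |X| * ∑_{Hs} conj (χ p)
  have step1 :
      ∑ p : M5.G m,
        trace ℂ _ ((Representation.ofMulAction ℂ (M5.G m) (M5.X m)) p) * (starRingEnd ℂ) (χ p)
      = (Fintype.card (M5.X m) : ℂ) * ∑ p ∈ Hs, (starRingEnd ℂ) (χ p) := by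
    have h1 : ∀ p : M5.G m,
        trace ℂ _ ((Representation.ofMulAction ℂ (M5.G m) (M5.X m)) p) * (starRingEnd ℂ) (χ p)
          = ∑ u : M5.X m, if p • u = u then (starRingEnd ℂ) (χ p) else 0 := by
      intro p
      rw [M5.trace_perm]
      rw [← Finset.sum_filter, Finset.sum_const, nsmul_eq_mul]
    rw [Finset.sum_congr rfl (fun p _ => h1 p), Finset.sum_comm]
    have h2 : ∀ u : M5.X m,
        ∑ p : M5.G m, (if p • u = u then (starRingEnd ℂ) (χ p) else 0)
          = ∑ p ∈ Hs, (starRingEnd ℂ) (χ p) := by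
      intro u
      rw [← Finset.sum_filter]
      obtain ⟨a, ha⟩ := M5.exists_smul_u0 u
      apply Finset.sum_nbij' (i := fun q => a⁻¹ * q * a) (j := fun q => a * q * a⁻¹)
      · intro q hq
        rw [Finset.mem_filter] at hq ⊢
        refine ⟨Finset.mem_univ _, ?_⟩
        have h3 : (a⁻¹ * q * a) • M5.u0 m = a⁻¹ • q • a • M5.u0 m := by
          rw [mul_smul, mul_smul]
        rw [h3, ha, hq.2, ← ha, inv_smul_smul]
      · intro q hq
        rw [Finset.mem_filter] at hq ⊢
        refine ⟨Finset.mem_univ _, ?_⟩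
        have h3 : (a * q * a⁻¹) • u = a • q • a⁻¹ • u := by
          rw [mul_smul, mul_smul]
        rw [h3, ← ha, inv_smul_smul, hq.2]
      · intro q _; group
      · intro q _; group
      · intro q _
        have h4 := M5.trace_rep_conj ρW a⁻¹ q
        rw [inv_inv] at h4
        exact congrArg (starRingEnd ℂ) h4.symm
    rw [Finset.sum_congr rfl (fun u _ => h2 u), Finset.sum_const, nsmul_eq_mul,
      Finset.card_univ]
  -- realness
  have hmem : ∀ p : M5.G m, p ∈ Hs ↔ p • M5.u0 m = M5.u0 m := by
    intro p; rw [hHs, Finset.mem_filter]; simp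
  have real1 : ∑ p ∈ Hs, (starRingEnd ℂ) (χ p) = ∑ p ∈ Hs, χ p := by
    obtain ⟨n, hn⟩ := M5.sum_trace_nat ρW Hs
      ((hmem 1).2 (one_smul _ _))
      (fun a ha b hb => (hmem _).2 (by
        rw [mul_smul, (hmem b).1 hb, (hmem a).1 ha]))
      (fun a ha => (hmem _).2 (by
        rw [inv_smul_eq_iff, (hmem a).1 ha]))
    have h5 : ∑ p ∈ Hs, (starRingEnd ℂ) (χ p) = (starRingEnd ℂ) (∑ p ∈ Hs, χ p) :=
      (map_sum (starRingEnd ℂ) _ _).symm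
    rw [h5, hn]
    simp
  -- rewrite over the parametrization
  have step2 : ∑ p ∈ Hs, χ p
      = ∑ σ : Perm (Fin m), ∑ τ ∈ ({1, M5.tau0 m} : Finset (Perm (Fin (m+2)))),
          trace ℂ VU (U (extPerm (by omega) σ)) *
            trace ℂ VV (V (extPerm (by omega) σ * τ)) := by
    rw [hHs, M5.stab_sum χ]
    apply Finset.sum_congr rfl
    intro σ _
    apply Finset.sum_congr rfl
    intro τ _
    rw [key]
    dsimp only
    rw [M5.trace_perm_inv]
  -- cardinalities
  have hXpos : (Fintype.card (M5.X m) : ℂ) ≠ 0 := by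
    have : 0 < Fintype.card (M5.X m) := Fintype.card_pos_iff.2 ⟨M5.u0 m⟩
    exact_mod_cast this.ne'
  have hfpos : ((2 * Nat.factorial m : ℕ) : ℂ) ≠ 0 := by
    have : 0 < 2 * Nat.factorial m := by positivity
    exact_mod_cast this.ne'
  have hG : (Fintype.card (M5.G m) : ℂ)
      = (Fintype.card (M5.X m) : ℂ) * ((2 * Nat.factorial m : ℕ) : ℂ) := by
    rw [← Nat.cast_mul, M5.card_eq]
  show (1 / (Fintype.card (M5.G m) : ℂ)) *
      ∑ p : M5.G m,
        trace ℂ _ ((Representation.ofMulAction ℂ (M5.G m) (M5.X m)) p) * (starRingEnd ℂ) (χ p)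
    = _
  rw [step1, real1, step2, hG]
  have htau : ({1, M5.tau0 m} : Finset (Perm (Fin (m+2))))
      = ({1, Equiv.swap (⟨m, by omega⟩ : Fin (m + 2)) (Fin.last (m + 1))} :
          Finset (Perm (Fin (m + 2)))) := rfl
  rw [htau]
  have harith : ∀ (A F S : ℂ), A ≠ 0 → 1/(A*F) * (A*S) = 1/F * S := by
    intro A F S hA
    by_cases hF : F = 0
    · simp [hF]
    · field_simp
  have hc : ((2 * Nat.factorial m : ℕ) : ℂ) = (2 * Nat.factorial m : ℂ) := by push_cast; ring
  rw [hc]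
  exact harith _ _ _ hXpos
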